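/- Fix 1 ≤ k < n and let ŵ ∈ S_n be defined by ŵ(t) = k+1−t for 1 ≤ t ≤ k and ŵ(t) = n+k+1−t for k+1 ≤ t ≤ n. Let T be a set of pairwise disjoint pairs (i_s,j_s) with i_s ≤ k < j_s, let i₁ ≤ k not be an endpoint of any pair of T, and let j₁, j > k be two distinct indices that are not endpoints of any pair of T. Put S = {(i₁,j₁)} ∪ T and S' = {(i₁,j)} ∪ T, and let σ_S, σ_{S'} be the products of the corresponding transpositions. Then ŵ·σ_{S'}·ŵ < ŵ·σ_S·ŵ in the Bruhat order on S_n if and only if j > j₁. -/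

import Mathlib

/-- The Bruhat order on `Sₙ`, via the standard dot-criterion characterization:
`u ≤ v` iff for all `p, q`, `#{a ≤ p : u a ≥ q} ≤ #{a ≤ p : v a ≥ q}`. -/
def bruhatLE {n : ℕ} (u v : Equiv.Perm (Fin n)) : Prop :=
  ∀ p q : Fin n,
    (Finset.univ.filter fun a : Fin n => a ≤ p ∧ q ≤ u a).card ≤
      (Finset.univ.filter fun a : Fin n => a ≤ p ∧ q ≤ v a).card

/-- The strict Bruhat order on `Sₙ`. -/
def bruhatLT {n : ℕ} (u v : Equiv.Perm (Fin n)) : Prop :=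
  bruhatLE u v ∧ u ≠ v

private lemma prod_fix_aux {n : ℕ} (l : List (Equiv.Perm (Fin n))) (x : Fin n)
    (h : ∀ e ∈ l, e x = x) : l.prod x = x := by
  induction l with
  | nil => simp
  | cons e t ih =>
    rw [List.prod_cons, Equiv.Perm.mul_apply,
      ih (fun e he => h e (List.mem_cons_of_mem _ he)), h e List.mem_cons_self]

/-- Fix `1 ≤ k < n` and let `ŵ ∈ Sₙ` be the longest element of
`S_k × S_{[k+1,n]}`.  Let `T` be a set of pairwise disjoint pairs `(iₛ, jₛ)` with
`iₛ ≤ k < jₛ`, let `i₁ ≤ k` not be an endpoint of any pair of `T`, and let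
`j₁, j > k` be two distinct indices which are not endpoints of any pair of `T`.  Put
`S = {(i₁, j₁)} ∪ T` and `S' = {(i₁, j)} ∪ T`.  Then
`ŵ·σ_{S'}·ŵ < ŵ·σ_S·ŵ` in the Bruhat order iff `j > j₁`. -/
theorem bruhat_move_right_endpoint (n k : ℕ) (hk1 : 1 ≤ k) (hkn : k < n) (m : ℕ)
    (p : Fin m → Fin n × Fin n)
    (hp : ∀ s, ((p s).1 : ℕ) < k ∧ k ≤ ((p s).2 : ℕ))
    (hdisj : ∀ s t : Fin m, s ≠ t →
      (p s).1 ≠ (p t).1 ∧ (p s).1 ≠ (p t).2 ∧ (p s).2 ≠ (p t).1 ∧ (p s).2 ≠ (p t).2)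
    (i₁ j₁ j : Fin n) (hi₁ : (i₁ : ℕ) < k) (hj₁ : k ≤ (j₁ : ℕ)) (hj : k ≤ (j : ℕ))
    (hjj₁ : j ≠ j₁)
    (hnew : ∀ s : Fin m,
      i₁ ≠ (p s).1 ∧ i₁ ≠ (p s).2 ∧ j₁ ≠ (p s).1 ∧ j₁ ≠ (p s).2 ∧
        j ≠ (p s).1 ∧ j ≠ (p s).2)
    (w : Equiv.Perm (Fin n))
    (hw : ∀ t : Fin n,
      (w t : ℕ) = if (t : ℕ) < k then k - 1 - (t : ℕ) else n + k - 1 - (t : ℕ))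
    (σT σS σS' : Equiv.Perm (Fin n))
    (hσT : σT = (List.ofFn fun s => Equiv.swap (p s).1 (p s).2).prod)
    (hσS : σS = Equiv.swap i₁ j₁ * σT)
    (hσS' : σS' = Equiv.swap i₁ j * σT) :
    bruhatLT (w * σS' * w) (w * σS * w) ↔ j₁ < j := by
  -- w is an involution
  have hwinv : ∀ t : Fin n, w (w t) = t := by
    intro t
    have h1 := hw t
    have h2 := hw (w t)
    have ht := t.isLt
    have hwt := (w t).isLt
    apply Fin.ext
    rw [h2, h1]
    split_ifs at h1 ⊢ <;> omega
  -- σT fixes i₁, j₁, j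
  have hfixT : ∀ x : Fin n, (∀ s : Fin m, x ≠ (p s).1 ∧ x ≠ (p s).2) → σT x = x := by
    intro x hx
    rw [hσT]
    apply prod_fix_aux
    intro e he
    rw [List.mem_ofFn] at he
    obtain ⟨s, rfl⟩ := he
    exact Equiv.swap_apply_of_ne_of_ne (hx s).1 (hx s).2
  have hTi₁ : σT i₁ = i₁ := hfixT i₁ (fun s => ⟨(hnew s).1, (hnew s).2.1⟩)
  have hTj₁ : σT j₁ = j₁ := hfixT j₁ (fun s => ⟨(hnew s).2.2.1, (hnew s).2.2.2.1⟩)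
  have hTj : σT j = j := hfixT j (fun s => ⟨(hnew s).2.2.2.2.1, (hnew s).2.2.2.2.2⟩)
  -- basic inequalities between the three special points
  have hji₁ : j ≠ i₁ := Fin.ne_of_val_ne (by omega)
  have hj₁i₁ : j₁ ≠ i₁ := Fin.ne_of_val_ne (by omega)
  -- values of w on the three points
  have hAv : (w i₁ : ℕ) = k - 1 - (i₁ : ℕ) := by rw [hw i₁, if_pos hi₁]
  have hBv : (w j₁ : ℕ) = n + k - 1 - (j₁ : ℕ) := by rw [hw j₁, if_neg (by omega)]
  have hCv : (w j : ℕ) = n + k - 1 - (j : ℕ) := by rw [hw j, if_neg (by omega)]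
  have hj₁n := j₁.isLt
  have hjn := j.isLt
  have hAk : (w i₁ : ℕ) < k := by omega
  have hBk : k ≤ (w j₁ : ℕ) := by omega
  have hCk : k ≤ (w j : ℕ) := by omega
  have hBC : w j₁ ≠ w j := fun h => hjj₁ (w.injective h).symm
  have hAB : w i₁ ≠ w j₁ := Fin.ne_of_val_ne (by omega)
  have hAC : w i₁ ≠ w j := Fin.ne_of_val_ne (by omega)
  have hBCv : (w j₁ : ℕ) ≠ (w j : ℕ) := Fin.val_ne_of_ne hBC
  -- pointwise values of u := w σS' w and v := w σS w
  have huA : (w * σS' * w) (w i₁) = w j := by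
    simp only [hσS', Equiv.Perm.mul_apply, hwinv, hTi₁, Equiv.swap_apply_left]
  have huB : (w * σS' * w) (w j₁) = w j₁ := by
    simp only [hσS', Equiv.Perm.mul_apply, hwinv, hTj₁,
      Equiv.swap_apply_of_ne_of_ne hj₁i₁ (fun h => hjj₁ h.symm)]
  have huC : (w * σS' * w) (w j) = w i₁ := by
    simp only [hσS', Equiv.Perm.mul_apply, hwinv, hTj, Equiv.swap_apply_right]
  have hvA : (w * σS * w) (w i₁) = w j₁ := by
    simp only [hσS, Equiv.Perm.mul_apply, hwinv, hTi₁, Equiv.swap_apply_left]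
  have hvB : (w * σS * w) (w j₁) = w i₁ := by
    simp only [hσS, Equiv.Perm.mul_apply, hwinv, hTj₁, Equiv.swap_apply_right]
  have hvC : (w * σS * w) (w j) = w j := by
    simp only [hσS, Equiv.Perm.mul_apply, hwinv, hTj, Equiv.swap_apply_of_ne_of_ne hji₁ hjj₁]
  -- u and v agree outside {w i₁, w j₁, w j}
  have hwx : ∀ (x z : Fin n), x ≠ w z → w x ≠ z := by
    intro x z hne h
    exact hne (by rw [← h, hwinv])
  have key : ∀ (y z : Fin n), σT z = z → y ≠ z → σT y ≠ z := by
    intro y z hz hne h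
    exact hne (by rw [← hz] at h; exact σT.injective h)
  have hagree : ∀ x : Fin n, x ≠ w i₁ → x ≠ w j₁ → x ≠ w j →
      (w * σS' * w) x = (w * σS * w) x := by
    intro x hxA hxB hxC
    have h1 : σT (w x) ≠ i₁ := key (w x) i₁ hTi₁ (hwx x i₁ hxA)
    have h2 : σT (w x) ≠ j₁ := key (w x) j₁ hTj₁ (hwx x j₁ hxB)
    have h3 : σT (w x) ≠ j := key (w x) j hTj (hwx x j hxC)
    simp only [hσS, hσS', Equiv.Perm.mul_apply,
      Equiv.swap_apply_of_ne_of_ne h1 h3, Equiv.swap_apply_of_ne_of_ne h1 h2]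
  -- counting decomposition
  have triple_card : ∀ (σ : Equiv.Perm (Fin n)) (P Q : Fin n),
      (Finset.univ.filter fun a : Fin n => a ≤ P ∧ Q ≤ σ a).card
        = ∑ a ∈ Finset.univ \ ({w i₁, w j₁, w j} : Finset (Fin n)),
            (if a ≤ P ∧ Q ≤ σ a then 1 else 0)
          + ((if w i₁ ≤ P ∧ Q ≤ σ (w i₁) then 1 else 0)
            + (if w j₁ ≤ P ∧ Q ≤ σ (w j₁) then 1 else 0)
            + (if w j ≤ P ∧ Q ≤ σ (w j) then 1 else 0)) := by
    intro σ P Q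
    rw [Finset.card_filter,
      ← Finset.sum_sdiff (Finset.subset_univ ({w i₁, w j₁, w j} : Finset (Fin n)))]
    congr 1
    rw [show ({w i₁, w j₁, w j} : Finset (Fin n))
        = insert (w i₁) (insert (w j₁) {w j}) from rfl,
      Finset.sum_insert (by simp [hAB, hAC]), Finset.sum_insert (by simp [hBC]),
      Finset.sum_singleton]
    omega
  have hcard : ∀ P Q : Fin n,
      (Finset.univ.filter fun a : Fin n => a ≤ P ∧ Q ≤ (w * σS' * w) a).card
        + ((if w i₁ ≤ P ∧ Q ≤ w j₁ then 1 else 0)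
          + (if w j₁ ≤ P ∧ Q ≤ w i₁ then 1 else 0)
          + (if w j ≤ P ∧ Q ≤ w j then 1 else 0))
      = (Finset.univ.filter fun a : Fin n => a ≤ P ∧ Q ≤ (w * σS * w) a).card
        + ((if w i₁ ≤ P ∧ Q ≤ w j then 1 else 0)
          + (if w j₁ ≤ P ∧ Q ≤ w j₁ then 1 else 0)
          + (if w j ≤ P ∧ Q ≤ w i₁ then 1 else 0)) := by
    intro P Q
    rw [triple_card (w * σS' * w) P Q, triple_card (w * σS * w) P Q,
      huA, huB, huC, hvA, hvB, hvC]
    have hcomp : ∑ a ∈ Finset.univ \ ({w i₁, w j₁, w j} : Finset (Fin n)),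
        (if a ≤ P ∧ Q ≤ (w * σS' * w) a then 1 else 0)
        = ∑ a ∈ Finset.univ \ ({w i₁, w j₁, w j} : Finset (Fin n)),
        (if a ≤ P ∧ Q ≤ (w * σS * w) a then 1 else 0) := by
      apply Finset.sum_congr rfl
      intro x hx
      simp only [Finset.mem_sdiff, Finset.mem_insert, Finset.mem_singleton, not_or] at hx
      rw [hagree x hx.2.1 hx.2.2.1 hx.2.2.2]
    rw [hcomp]
    ring
  have hne : (w * σS' * w) ≠ (w * σS * w) := by
    intro h
    have : w j = w j₁ := by rw [← hvA, ← h, huA]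
    exact hBC this.symm
  constructor
  · rintro ⟨hle, -⟩
    by_contra hnot
    have hjlt : (j : ℕ) < (j₁ : ℕ) := by
      have h1 : ¬ (j₁ : ℕ) < (j : ℕ) := fun h => hnot h
      have h2 : (j : ℕ) ≠ (j₁ : ℕ) := Fin.val_ne_of_ne hjj₁
      omega
    -- then w j₁ < w j; counting fails at P = Q = w j₁
    have hlt : (w j₁ : ℕ) < (w j : ℕ) := by omega
    have hle' := hle (w j₁) (w j₁)
    have hc := hcard (w j₁) (w j₁)
    simp only [Fin.le_def] at hc hle'
    split_ifs at hc <;> omega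
  · intro hlt
    have hCB : (w j : ℕ) < (w j₁ : ℕ) := by
      have := Fin.lt_def.mp hlt
      omega
    refine ⟨?_, hne⟩
    intro P Q
    have hc := hcard P Q
    simp only [Fin.le_def] at hc ⊢
    split_ifs at hc <;> omega
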